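/- Let n ≥ 7 and let M be an n×n array in which every cell is colored red or blue, and suppose M cannot be partitioned into n pairwise disjoint balanced diagonals. Let T₁ and T₂ be diagonals contained in the set M_b of blue cells with T₁ ∩ T₂ = {(i,j)}. Then there exists a blue cell outside T₁ ∪ T₂ that lies neither in row i nor in column j. -/

import Mathlib

/-- A diagonal of an `n × n` array: the set of cells forming the graph of a
permutation of `Fin n` (n cells, no two in the same row or column). -/
def IsDiagonal (n : ℕ) (D : Finset (Fin n × Fin n)) : Prop :=
  ∃ σ : Equiv.Perm (Fin n), D = Finset.univ.image fun i => (i, σ i)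

/-- A set of cells is improper if there are indices `i, j` such that every cell
lies in row `i` or in column `j` but not in both. -/
def IsImproper (n : ℕ) (A : Finset (Fin n × Fin n)) : Prop :=
  ∃ i j : Fin n, ∀ c ∈ A, (c.1 = i ∨ c.2 = j) ∧ c ≠ (i, j)

/-- A set of cells is proper if it is not improper. -/
def IsProper (n : ℕ) (A : Finset (Fin n × Fin n)) : Prop := ¬ IsImproper n A

/-- A partition of the cells of the `n × n` array into `n` pairwise disjoint diagonals. -/
def IsDiagonalPartition (n : ℕ) (D : Fin n → Finset (Fin n × Fin n)) : Prop :=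
  (∀ k, IsDiagonal n (D k)) ∧ (∀ k l, k ≠ l → Disjoint (D k) (D l)) ∧
    Finset.univ.biUnion D = Finset.univ

/-- Given a 2-coloring `blue : Fin n × Fin n → Bool` (`true` = blue, `false` = red),
a set of cells is balanced if it contains a blue cell and a red cell. -/
def IsBalanced (n : ℕ) (blue : Fin n × Fin n → Bool) (D : Finset (Fin n × Fin n)) : Prop :=
  (∃ c ∈ D, blue c = true) ∧ (∃ c ∈ D, blue c = false)

namespace Stmt8Aux

open Finset

/-- pair inclusion-exclusion -/
lemma pairIE {γ : Type*} [DecidableEq γ] [Fintype γ] (S₁ S₂ : Finset γ) :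
    S₁.card + S₂.card ≤ Fintype.card γ + (S₁ ∩ S₂).card := by
  have h := Finset.card_union_add_card_inter S₁ S₂
  have h2 : (S₁ ∪ S₂).card ≤ Fintype.card γ := by
    simpa using Finset.card_le_card (Finset.subset_univ (S₁ ∪ S₂))
  omega

/-- triple inclusion-exclusion -/
lemma tripleIE {γ : Type*} [DecidableEq γ] [Fintype γ] (S₁ S₂ S₃ : Finset γ) :
    S₁.card + S₂.card + S₃.card ≤
      Fintype.card γ + ((S₁ ∩ S₂).card + (S₁ ∩ S₃).card + (S₂ ∩ S₃).card) := by
  have h1 := Finset.card_union_add_card_inter S₁ S₂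
  have h2 := Finset.card_union_add_card_inter (S₁ ∪ S₂) S₃
  have h3 : ((S₁ ∪ S₂) ∩ S₃).card ≤ (S₁ ∩ S₃).card + (S₂ ∩ S₃).card := by
    have : (S₁ ∪ S₂) ∩ S₃ = (S₁ ∩ S₃) ∪ (S₂ ∩ S₃) := Finset.union_inter_distrib_right ..
    rw [this]
    exact Finset.card_union_le _ _
  have h4 : ((S₁ ∪ S₂) ∪ S₃).card ≤ Fintype.card γ := by
    simpa using Finset.card_le_card (Finset.subset_univ _)
  omega

/-- The master lemma: from `hno`, any family of `n` disjoint diagonals of the special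
form (built from a class family `π` with unique "fixed" cells), in the presence of
confinement of blue cells, yields a class whose `T₂`-alignment set is large. -/
lemma master {n : ℕ} (blue : Fin n × Fin n → Bool)
    (hno : ¬ ∃ D : Fin n → Finset (Fin n × Fin n),
      IsDiagonalPartition n D ∧ ∀ k, IsBalanced n blue (D k))
    {T₁ T₂ : Finset (Fin n × Fin n)}
    (σp τp : Equiv.Perm (Fin n))
    (hσ : T₁ = Finset.univ.image fun a => (a, σp a))
    (hτ : T₂ = Finset.univ.image fun a => (a, τp a))
    (hT₁b : ∀ c ∈ T₁, blue c = true)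
    (i j : Fin n)
    (hconf : ∀ c : Fin n × Fin n, blue c = true → c ∈ T₁ ∪ T₂ ∨ c.1 = i ∨ c.2 = j)
    {γ : Type*} [Fintype γ] [DecidableEq γ] (E : γ ≃ Fin n)
    (π : γ → Equiv.Perm γ)
    (hpart : ∀ a b : γ, ∃! k, π k a = b)
    (hfix : ∀ k, ∃ a, π k a = a)
    (hfixcard : ∀ k, (Finset.univ.filter (fun a => π k a = a)).card ≤ 1) :
    ∃ q, n ≤ 3 + (Finset.univ.filter
      (fun a => π q a = E.symm (σp.symm (τp (E a))))).card := by
  classical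
  have hcardγ : Fintype.card γ = n := by
    rw [Fintype.card_congr E, Fintype.card_fin]
  -- the diagonals
  set D : Fin n → Finset (Fin n × Fin n) :=
    fun kf => Finset.univ.image (fun a : γ => (E a, σp (E (π (E.symm kf) a)))) with hD
  have hmem : ∀ (kf : Fin n) (c : Fin n × Fin n),
      c ∈ D kf ↔ ∃ a : γ, (E a, σp (E (π (E.symm kf) a))) = c := by
    intro kf c
    simp [hD, Finset.mem_image]
  have hdiag : ∀ kf, IsDiagonal n (D kf) := by
    intro kf
    refine ⟨((E.symm.trans (π (E.symm kf))).trans E).trans σp, ?_⟩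
    ext c
    rw [hmem]
    simp only [Finset.mem_image, Finset.mem_univ, true_and]
    constructor
    · rintro ⟨a, rfl⟩
      exact ⟨E a, by simp⟩
    · rintro ⟨b, rfl⟩
      exact ⟨E.symm b, by simp⟩
  have hdisj : ∀ k l, k ≠ l → Disjoint (D k) (D l) := by
    intro k l hkl
    rw [Finset.disjoint_left]
    intro c hck hcl
    rw [hmem] at hck hcl
    obtain ⟨a, ha⟩ := hck
    obtain ⟨b, hb⟩ := hcl
    have heq := ha.trans hb.symm
    rw [Prod.mk.injEq] at heq
    obtain ⟨h1, h2⟩ := heq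
    have hab : a = b := E.injective h1
    subst hab
    have h3 : π (E.symm k) a = π (E.symm l) a := E.injective (σp.injective h2)
    obtain ⟨w, _, hw⟩ := hpart a (π (E.symm k) a)
    have h4 : E.symm k = E.symm l := (hw _ rfl).trans (hw _ h3.symm).symm
    exact hkl (E.symm.injective h4)
  have hcover : Finset.univ.biUnion D = Finset.univ := by
    apply Finset.eq_univ_of_forall
    intro c
    rw [Finset.mem_biUnion]
    obtain ⟨k₀, hk₀, _⟩ := hpart (E.symm c.1) (E.symm (σp.symm c.2))
    refine ⟨E k₀, Finset.mem_univ _, ?_⟩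
    rw [hmem]
    refine ⟨E.symm c.1, ?_⟩
    simp only [Equiv.symm_apply_apply]
    rw [hk₀]
    simp
  -- some class is unbalanced
  have hexq : ∃ kf, ¬ IsBalanced n blue (D kf) := by
    by_contra hall
    push_neg at hall
    exact hno ⟨D, ⟨hdiag, hdisj, hcover⟩, hall⟩
  obtain ⟨kf, hkf⟩ := hexq
  set q : γ := E.symm kf with hq
  refine ⟨q, ?_⟩
  -- the class has a blue cell
  obtain ⟨a₀, ha₀⟩ := hfix q
  have hbluecell : ∃ c ∈ D kf, blue c = true := by
    refine ⟨(E a₀, σp (E a₀)), ?_, ?_⟩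
    · rw [hmem]; exact ⟨a₀, by rw [← hq, ha₀]⟩
    · apply hT₁b
      rw [hσ]
      exact Finset.mem_image.mpr ⟨E a₀, Finset.mem_univ _, rfl⟩
  -- hence it has no red cell
  have hallblue : ∀ c ∈ D kf, blue c = true := by
    intro c hc
    by_contra hred
    exact hkf ⟨hbluecell, ⟨c, hc, by revert hred; cases blue c <;> simp⟩⟩
  -- classify all rows
  have hclassify : (Finset.univ : Finset γ) ⊆
      (Finset.univ.filter (fun a => π q a = a)) ∪
      (Finset.univ.filter (fun a => π q a = E.symm (σp.symm (τp (E a))))) ∪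
      {E.symm i} ∪ {(π q).symm (E.symm (σp.symm j))} := by
    intro a _
    have hc : (E a, σp (E (π q a))) ∈ D kf := by
      rw [hmem]; exact ⟨a, by rw [← hq]⟩
    have hb := hallblue _ hc
    rcases hconf _ hb with hmem' | h1 | h2
    · rcases Finset.mem_union.mp hmem' with hT | hT
      · -- in T₁ : π q a = a
        rw [hσ] at hT
        obtain ⟨b, _, hb'⟩ := Finset.mem_image.mp hT
        have hb1 : b = E a := congrArg Prod.fst hb'
        have hb2 : σp b = σp (E (π q a)) := congrArg Prod.snd hb'
        subst hb1
        have : π q a = a := (E.injective (σp.injective hb2)).symm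
        simp only [Finset.mem_union]
        exact Or.inl (Or.inl (Or.inl (Finset.mem_filter.mpr ⟨Finset.mem_univ _, this⟩)))
      · rw [hτ] at hT
        obtain ⟨b, _, hb'⟩ := Finset.mem_image.mp hT
        have hb1 : b = E a := congrArg Prod.fst hb'
        have hb2 : τp b = σp (E (π q a)) := congrArg Prod.snd hb'
        subst hb1
        have : π q a = E.symm (σp.symm (τp (E a))) := by
          rw [hb2]; simp
        simp only [Finset.mem_union]
        exact Or.inl (Or.inl (Or.inr (Finset.mem_filter.mpr ⟨Finset.mem_univ _, this⟩)))
    · -- row i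
      have : a = E.symm i := by
        simp only at h1
        rw [← h1]; simp
      simp only [Finset.mem_union, Finset.mem_singleton]
      exact Or.inl (Or.inr this)
    · -- column j
      have : (π q) a = E.symm (σp.symm j) := by
        simp only at h2
        rw [← h2]; simp
      have : a = (π q).symm (E.symm (σp.symm j)) := by
        rw [← this]; simp
      simp only [Finset.mem_union, Finset.mem_singleton]
      exact Or.inr this
  have hcard := Finset.card_le_card hclassify
  rw [Finset.card_univ, hcardγ] at hcard
  have c1 := hfixcard q
  have c2 : ((Finset.univ.filter (fun a => π q a = a)) ∪
      (Finset.univ.filter (fun a => π q a = E.symm (σp.symm (τp (E a))))) ∪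
      {E.symm i} ∪ {(π q).symm (E.symm (σp.symm j))}).card ≤
      (Finset.univ.filter (fun a => π q a = a)).card +
      (Finset.univ.filter (fun a => π q a = E.symm (σp.symm (τp (E a))))).card + 1 + 1 := by
    calc _ ≤ ((Finset.univ.filter (fun a => π q a = a)) ∪
        (Finset.univ.filter (fun a => π q a = E.symm (σp.symm (τp (E a))))) ∪
        {E.symm i}).card + 1 := by
          refine le_trans (Finset.card_union_le _ _) ?_
          simp
      _ ≤ _ := by
          have := Finset.card_union_le ((Finset.univ.filter (fun a => π q a = a)) ∪
            (Finset.univ.filter (fun a => π q a = E.symm (σp.symm (τp (E a))))))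
            ({E.symm i} : Finset γ)
          have h2 := Finset.card_union_le (Finset.univ.filter (fun a => π q a = a))
            (Finset.univ.filter (fun a => π q a = E.symm (σp.symm (τp (E a)))))
          simp only [Finset.card_singleton] at this
          omega
  omega

end Stmt8Aux

namespace Stmt8Aux

open Finset

/-- affine permutation `x ↦ muinv * (κ - lam * x)` of a commutative ring. -/
def affPerm {R : Type*} [CommRing R] (lam laminv muinv κ : R)
    (hl : lam * laminv = 1) (hm : (1 - lam) * muinv = 1) : Equiv.Perm R where
  toFun x := muinv * (κ - lam * x)
  invFun y := laminv * (κ - (1 - lam) * y)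
  left_inv x := by
    show laminv * (κ - (1 - lam) * (muinv * (κ - lam * x))) = x
    have h1 : (1 - lam) * (muinv * (κ - lam * x)) = κ - lam * x := by
      rw [← mul_assoc, hm, one_mul]
    rw [h1]
    have h2 : κ - (κ - lam * x) = lam * x := by ring
    rw [h2, ← mul_assoc, mul_comm laminv lam, hl, one_mul]
  right_inv y := by
    show muinv * (κ - lam * (laminv * (κ - (1 - lam) * y))) = y
    have h1 : lam * (laminv * (κ - (1 - lam) * y)) = κ - (1 - lam) * y := by
      rw [← mul_assoc, hl, one_mul]
    rw [h1]
    have h2 : κ - (κ - (1 - lam) * y) = (1 - lam) * y := by ring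
    rw [h2, ← mul_assoc, mul_comm muinv (1 - lam), hm, one_mul]

@[simp] lemma affPerm_apply {R : Type*} [CommRing R] (lam laminv muinv κ : R)
    (hl : lam * laminv = 1) (hm : (1 - lam) * muinv = 1) (x : R) :
    affPerm lam laminv muinv κ hl hm x = muinv * (κ - lam * x) := rfl

lemma ringCase {n : ℕ} (blue : Fin n × Fin n → Bool)
    (hno : ¬ ∃ D : Fin n → Finset (Fin n × Fin n),
      IsDiagonalPartition n D ∧ ∀ k, IsBalanced n blue (D k))
    {T₁ T₂ : Finset (Fin n × Fin n)}
    (σp τp : Equiv.Perm (Fin n))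
    (hσ : T₁ = Finset.univ.image fun a => (a, σp a))
    (hτ : T₂ = Finset.univ.image fun a => (a, τp a))
    (hT₁b : ∀ c ∈ T₁, blue c = true)
    (i j : Fin n)
    (hconf : ∀ c : Fin n × Fin n, blue c = true → c ∈ T₁ ∪ T₂ ∨ c.1 = i ∨ c.2 = j)
    (R : Type*) [CommRing R] [Fintype R] [DecidableEq R]
    (hcard : Fintype.card R = n)
    (lam laminv muinv : Fin 3 → R)
    (hl : ∀ t, lam t * laminv t = 1)
    (hm : ∀ t, (1 - lam t) * muinv t = 1)
    (g : ℕ)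
    (hfib : ∀ t t' : Fin 3, t ≠ t' → ∀ e : R,
      (Finset.univ.filter (fun x => (lam t' - lam t) * x = e)).card ≤ g)
    (harith : 9 + 3 * g < 2 * n) : False := by
  classical
  set E : R ≃ Fin n := Fintype.equivFinOfCardEq hcard with hE
  set π : Fin 3 → R → Equiv.Perm R :=
    fun t κ => affPerm (lam t) (laminv t) (muinv t) κ (hl t) (hm t) with hπ
  have happly : ∀ t κ x, π t κ x = muinv t * (κ - lam t * x) := fun t κ x => rfl
  have hcancel : ∀ (t : Fin 3) (u v : R), muinv t * u = muinv t * v → u = v := by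
    intro t u v h
    have := congrArg (fun z => (1 - lam t) * z) h
    simpa [← mul_assoc, hm t] using this
  have hpart : ∀ t (x y : R), ∃! κ, π t κ x = y := by
    intro t x y
    refine ⟨lam t * x + (1 - lam t) * y, ?_, ?_⟩
    · show π t (lam t * x + (1 - lam t) * y) x = y
      rw [happly]
      have h2 : lam t * x + (1 - lam t) * y - lam t * x = (1 - lam t) * y := by ring
      rw [h2, mul_comm (muinv t), mul_assoc, mul_comm y (muinv t), ← mul_assoc, hm t, one_mul]
    · intro κ' hκ'
      rw [happly] at hκ'
      have h3 : (1 - lam t) * (muinv t * (κ' - lam t * x)) = (1 - lam t) * y :=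
        congrArg (fun z => (1 - lam t) * z) hκ'
      rw [← mul_assoc, hm t, one_mul] at h3
      linear_combination h3
  have hfixx : ∀ t (κ : R), π t κ κ = κ := by
    intro t κ
    rw [happly]
    have h2 : κ - lam t * κ = (1 - lam t) * κ := by ring
    rw [h2, ← mul_assoc, mul_comm (muinv t) (1 - lam t), hm t, one_mul]
  have hfixcard : ∀ t (κ : R),
      (Finset.univ.filter (fun a => π t κ a = a)).card ≤ 1 := by
    intro t κ
    have hsub : (Finset.univ.filter (fun a => π t κ a = a)) ⊆ {κ} := by
      intro a ha
      have ha' := (Finset.mem_filter.mp ha).2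
      rw [happly] at ha'
      have h3 : (1 - lam t) * (muinv t * (κ - lam t * a)) = (1 - lam t) * a :=
        congrArg (fun z => (1 - lam t) * z) ha'
      rw [← mul_assoc, hm t, one_mul] at h3
      have : a = κ := by linear_combination -h3
      simp [this]
    simpa using Finset.card_le_card hsub
  -- apply master three times
  have hmas : ∀ t : Fin 3, ∃ q, n ≤ 3 + (Finset.univ.filter
      (fun a => π t q a = E.symm (σp.symm (τp (E a))))).card := by
    intro t
    exact master blue hno σp τp hσ hτ hT₁b i j hconf E (π t)
      (hpart t) (fun κ => ⟨κ, hfixx t κ⟩) (hfixcard t)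
  obtain ⟨q0, hq0⟩ := hmas 0
  obtain ⟨q1, hq1⟩ := hmas 1
  obtain ⟨q2, hq2⟩ := hmas 2
  set ρ : R → R := fun a => E.symm (σp.symm (τp (E a))) with hρ
  set κv : Fin 3 → R := fun t => if t = 0 then q0 else if t = 1 then q1 else q2 with hκv
  set S : Fin 3 → Finset R := fun t =>
    Finset.univ.filter (fun a => π t (κv t) a = ρ a) with hS
  have hScard0 : n ≤ 3 + (S 0).card := by simpa [hS, hκv] using hq0
  have hScard1 : n ≤ 3 + (S 1).card := by simpa [hS, hκv] using hq1
  have hScard2 : n ≤ 3 + (S 2).card := by simpa [hS, hκv] using hq2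
  have hover : ∀ t t' : Fin 3, t ≠ t' → (S t ∩ S t').card ≤ g := by
    intro t t' htt
    have hsub : S t ∩ S t' ⊆ Finset.univ.filter
        (fun x => (lam t' - lam t) * x =
          (1 - lam t) * κv t' - (1 - lam t') * κv t) := by
      intro a ha
      rw [Finset.mem_inter, hS] at ha
      simp only [Finset.mem_filter, Finset.mem_univ, true_and] at ha
      obtain ⟨hta, hta'⟩ := ha
      have e1 : κv t - lam t * a = (1 - lam t) * ρ a := by
        have h := congrArg (fun z => (1 - lam t) * z) hta
        rw [happly, ← mul_assoc, hm t, one_mul] at h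
        exact h
      have e2 : κv t' - lam t' * a = (1 - lam t') * ρ a := by
        have h := congrArg (fun z => (1 - lam t') * z) hta'
        rw [happly, ← mul_assoc, hm t', one_mul] at h
        exact h
      simp only [Finset.mem_filter, Finset.mem_univ, true_and]
      linear_combination (1 - lam t') * e1 - (1 - lam t) * e2
    exact le_trans (Finset.card_le_card hsub) (hfib t t' htt _)
  have h01 : (S 0 ∩ S 1).card ≤ g := hover 0 1 (by decide)
  have h02 : (S 0 ∩ S 2).card ≤ g := hover 0 2 (by decide)
  have h12 : (S 1 ∩ S 2).card ≤ g := hover 1 2 (by decide)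
  have htri := tripleIE (S 0) (S 1) (S 2)
  rw [hcard] at htri
  omega

end Stmt8Aux

namespace Stmt8Aux

open Finset

lemma fibOfAnn {R : Type*} [CommRing R] [Fintype R] [DecidableEq R] (d e : R) (A : ℕ)
    (hA : (Finset.univ.filter (fun x : R => d * x = 0)).card ≤ A) :
    (Finset.univ.filter (fun x : R => d * x = e)).card ≤ A := by
  by_cases hex : ∃ x₀ : R, d * x₀ = e
  · obtain ⟨x₀, hx₀⟩ := hex
    refine le_trans (Finset.card_le_card_of_injOn (fun x => x - x₀) ?_ ?_) hA
    · intro x hx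
      have hx' := (Finset.mem_filter.mp hx).2
      refine Finset.mem_filter.mpr ⟨Finset.mem_univ _, ?_⟩
      rw [mul_sub, hx', hx₀, sub_self]
    · intro x _ y _ h
      simpa using congrArg (fun z => z + x₀) h
  · push_neg at hex
    have : (Finset.univ.filter (fun x : R => d * x = e)) = ∅ := by
      apply Finset.eq_empty_of_forall_notMem
      intro x hx
      exact hex x (Finset.mem_filter.mp hx).2
    simp [this]

lemma fibMul {R : Type*} [CommRing R] [Fintype R] [DecidableEq R] (u v : R)
    (huv : u * v = 1) (e : R) (A : ℕ)
    (hA : ∀ e' : R, (Finset.univ.filter (fun x : R => 3 * x = e')).card ≤ A) :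
    (Finset.univ.filter (fun x : R => (3 * u) * x = e)).card ≤ A := by
  refine le_trans (Finset.card_le_card_of_injOn (fun x => u * x) ?_ ?_) (hA e)
  · intro x hx
    have hx' := (Finset.mem_filter.mp hx).2
    refine Finset.mem_filter.mpr ⟨Finset.mem_univ _, ?_⟩
    rw [← mul_assoc]; exact hx'
  · intro x _ y _ h
    have h2 := congrArg (fun z => v * z) h
    simp only [← mul_assoc, mul_comm v u, huv, one_mul] at h2
    exact h2

lemma annCard3 {M : ℕ} [NeZero M] :
    (Finset.univ.filter (fun x : ZMod M => 3 * x = 0)).card ≤ 3 := by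
  classical
  have hM : 0 < M := Nat.pos_of_ne_zero (NeZero.ne M)
  refine le_trans (Finset.card_le_card_of_injOn
    (fun x : ZMod M => (3 * x.val) / M) ?_ ?_) (by simp : (Finset.range 3).card ≤ 3)
  · intro x hx
    have hx' := (Finset.mem_filter.mp hx).2
    have hval : ((x.val : ℕ) : ZMod M) = x := ZMod.natCast_rightInverse x
    have hx'' : ((3 * x.val : ℕ) : ZMod M) = 0 := by push_cast [hval]; exact hx'
    have hdvd : M ∣ 3 * x.val := (ZMod.natCast_eq_zero_iff _ _).mp hx''
    have hlt : x.val < M := ZMod.val_lt x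
    obtain ⟨k, hk⟩ := hdvd
    have hk3 : k < 3 := by nlinarith
    refine Finset.mem_range.mpr ?_
    show 3 * x.val / M < 3
    rw [hk, Nat.mul_div_cancel_left _ hM]
    exact hk3
  · intro x hx y hy h
    have hxd : M ∣ 3 * x.val := by
      have hx' := (Finset.mem_filter.mp hx).2
      have hval : ((x.val : ℕ) : ZMod M) = x := ZMod.natCast_rightInverse x
      have hx'' : ((3 * x.val : ℕ) : ZMod M) = 0 := by push_cast [hval]; exact hx'
      exact (ZMod.natCast_eq_zero_iff _ _).mp hx''
    have hyd : M ∣ 3 * y.val := by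
      have hy' := (Finset.mem_filter.mp hy).2
      have hval : ((y.val : ℕ) : ZMod M) = y := ZMod.natCast_rightInverse y
      have hy'' : ((3 * y.val : ℕ) : ZMod M) = 0 := by push_cast [hval]; exact hy'
      exact (ZMod.natCast_eq_zero_iff _ _).mp hy''
    obtain ⟨k, hk⟩ := hxd
    obtain ⟨l, hl⟩ := hyd
    simp only at h
    rw [hk, hl, Nat.mul_div_cancel_left _ hM, Nat.mul_div_cancel_left _ hM] at h
    subst h
    have hveq : x.val = y.val := by omega
    have hvx : ((x.val : ℕ) : ZMod M) = x := ZMod.natCast_rightInverse x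
    have hvy : ((y.val : ℕ) : ZMod M) = y := ZMod.natCast_rightInverse y
    rw [← hvx, ← hvy, hveq]

lemma annCard1 {M : ℕ} [NeZero M] (h3 : ¬ (3 ∣ M)) :
    (Finset.univ.filter (fun x : ZMod M => 3 * x = 0)).card ≤ 1 := by
  classical
  have hsub : (Finset.univ.filter (fun x : ZMod M => 3 * x = 0)) ⊆ {0} := by
    intro x hx
    have hx' := (Finset.mem_filter.mp hx).2
    have hval : ((x.val : ℕ) : ZMod M) = x := ZMod.natCast_rightInverse x
    have hx'' : ((3 * x.val : ℕ) : ZMod M) = 0 := by push_cast [hval]; exact hx'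
    have hdvd : M ∣ 3 * x.val := (ZMod.natCast_eq_zero_iff _ _).mp hx''
    have hcop : Nat.Coprime M 3 :=
      ((Nat.prime_three).coprime_iff_not_dvd.mpr h3).symm
    have hdvd2 : M ∣ x.val := hcop.dvd_of_dvd_mul_left hdvd
    have hlt : x.val < M := ZMod.val_lt x
    have hv0 : x.val = 0 := Nat.eq_zero_of_dvd_of_lt hdvd2 hlt
    have : x = 0 := by rw [← hval, hv0]; simp
    simp [this]
  simpa using Finset.card_le_card hsub

end Stmt8Aux

namespace Stmt8Aux

open Finset

lemma oddCase {n : ℕ} (hn : 7 ≤ n) (hodd : Odd n) (hne9 : n ≠ 9)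
    (blue : Fin n × Fin n → Bool)
    (hno : ¬ ∃ D : Fin n → Finset (Fin n × Fin n),
      IsDiagonalPartition n D ∧ ∀ k, IsBalanced n blue (D k))
    {T₁ T₂ : Finset (Fin n × Fin n)}
    (σp τp : Equiv.Perm (Fin n))
    (hσ : T₁ = Finset.univ.image fun a => (a, σp a))
    (hτ : T₂ = Finset.univ.image fun a => (a, τp a))
    (hT₁b : ∀ c ∈ T₁, blue c = true)
    (i j : Fin n)
    (hconf : ∀ c : Fin n × Fin n, blue c = true → c ∈ T₁ ∪ T₂ ∨ c.1 = i ∨ c.2 = j) :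
    False := by
  haveI : NeZero n := ⟨by omega⟩
  classical
  set tI : ZMod n := (((n+1)/2 : ℕ) : ZMod n) with htI
  have hnat : 2 * ((n+1)/2) = n + 1 := by obtain ⟨k, hk⟩ := hodd; omega
  have h2 : (2 : ZMod n) * tI = 1 := by
    rw [htI]
    calc (2 : ZMod n) * (((n+1)/2 : ℕ) : ZMod n)
        = ((2 * ((n+1)/2) : ℕ) : ZMod n) := by push_cast; ring
      _ = ((n + 1 : ℕ) : ZMod n) := by rw [hnat]
      _ = 1 := by push_cast; simp
  have hcardR : Fintype.card (ZMod n) = n := ZMod.card n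
  set lam : Fin 3 → ZMod n := ![tI, 2, -1] with hlam
  set laminv : Fin 3 → ZMod n := ![2, tI, -1] with hlaminv
  set muinv : Fin 3 → ZMod n := ![2, -1, tI] with hmuinv
  have hlam0 : lam 0 = tI := rfl
  have hlam1 : lam 1 = 2 := rfl
  have hlam2 : lam 2 = -1 := rfl
  have hl : ∀ t, lam t * laminv t = 1 := by
    intro t
    fin_cases t
    · show tI * 2 = 1; linear_combination h2
    · show (2 : ZMod n) * tI = 1; exact h2
    · show (-1 : ZMod n) * -1 = 1; ring
  have hm : ∀ t, (1 - lam t) * muinv t = 1 := by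
    intro t
    fin_cases t
    · show (1 - tI) * 2 = 1; linear_combination -h2
    · show (1 - 2 : ZMod n) * (-1) = 1; ring
    · show (1 - (-1) : ZMod n) * tI = 1; linear_combination h2
  -- difference identities
  have htI2 : tI * 2 = 1 := by linear_combination h2
  have hntI2 : (-tI) * (-2) = 1 := by linear_combination h2
  have h1u : (1 : ZMod n) * 1 = 1 := by ring
  have hn1u : (-1 : ZMod n) * (-1) = 1 := by ring
  have hfibgen : ∀ (A : ℕ),
      (∀ e : ZMod n, (Finset.univ.filter (fun x : ZMod n => 3 * x = e)).card ≤ A) →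
      ∀ t t' : Fin 3, t ≠ t' → ∀ e : ZMod n,
      (Finset.univ.filter (fun x => (lam t' - lam t) * x = e)).card ≤ A := by
    intro A hbase t t' htt e
    have hex : ∃ u v : ZMod n, u * v = 1 ∧ lam t' - lam t = 3 * u := by
      fin_cases t <;> fin_cases t'
      · exact absurd rfl htt
      · exact ⟨tI, 2, htI2, by show (2:ZMod n) - tI = 3*tI; linear_combination (-2:ZMod n)*h2⟩
      · exact ⟨-tI, -2, hntI2, by show (-1:ZMod n) - tI = 3*(-tI); linear_combination h2⟩
      · exact ⟨-tI, -2, hntI2, by show tI - 2 = 3*(-tI); linear_combination (2:ZMod n)*h2⟩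
      · exact absurd rfl htt
      · exact ⟨-1, -1, hn1u, by show (-1:ZMod n) - 2 = 3*(-1); ring⟩
      · exact ⟨tI, 2, htI2, by show tI - (-1) = 3*tI; linear_combination -h2⟩
      · exact ⟨1, 1, h1u, by show (2:ZMod n) - (-1) = 3*1; ring⟩
      · exact absurd rfl htt
    obtain ⟨u, v, huv, hd⟩ := hex
    simp only [hd]
    exact fibMul u v huv e A hbase
  by_cases h3 : (3 : ℕ) ∣ n
  · have hn15 : 15 ≤ n := by
      obtain ⟨t, ht⟩ := h3
      obtain ⟨k, hk⟩ := hodd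
      omega
    have hbase : ∀ e : ZMod n,
        (Finset.univ.filter (fun x : ZMod n => 3 * x = e)).card ≤ 3 :=
      fun e => fibOfAnn 3 e 3 annCard3
    exact ringCase blue hno σp τp hσ hτ hT₁b i j hconf (ZMod n) hcardR
      lam laminv muinv hl hm 3 (hfibgen 3 hbase) (by omega)
  · have hbase : ∀ e : ZMod n,
        (Finset.univ.filter (fun x : ZMod n => 3 * x = e)).card ≤ 1 :=
      fun e => fibOfAnn 3 e 1 (annCard1 h3)
    exact ringCase blue hno σp τp hσ hτ hT₁b i j hconf (ZMod n) hcardR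
      lam laminv muinv hl hm 1 (hfibgen 1 hbase) (by omega)

lemma fieldCase {n : ℕ} (hn : 7 ≤ n)
    (blue : Fin n × Fin n → Bool)
    (hno : ¬ ∃ D : Fin n → Finset (Fin n × Fin n),
      IsDiagonalPartition n D ∧ ∀ k, IsBalanced n blue (D k))
    {T₁ T₂ : Finset (Fin n × Fin n)}
    (σp τp : Equiv.Perm (Fin n))
    (hσ : T₁ = Finset.univ.image fun a => (a, σp a))
    (hτ : T₂ = Finset.univ.image fun a => (a, τp a))
    (hT₁b : ∀ c ∈ T₁, blue c = true)
    (i j : Fin n)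
    (hconf : ∀ c : Fin n × Fin n, blue c = true → c ∈ T₁ ∪ T₂ ∨ c.1 = i ∨ c.2 = j)
    (F : Type*) [Field F] [Fintype F] [DecidableEq F]
    (hcard : Fintype.card F = n) :
    False := by
  classical
  -- pick three distinct elements not in {0, 1}
  set S : Finset F := (Finset.univ.erase 0).erase 1 with hSdef
  have hScard : 3 ≤ S.card := by
    have h1 : (Finset.univ.erase (0:F)).card = Fintype.card F - 1 := by
      rw [Finset.card_erase_of_mem (Finset.mem_univ _), Finset.card_univ]
    have h2 : S.card ≥ (Finset.univ.erase (0:F)).card - 1 := by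
      rw [hSdef]
      by_cases h : (1 : F) ∈ Finset.univ.erase (0:F)
      · rw [Finset.card_erase_of_mem h]
      · rw [Finset.erase_eq_of_notMem h]; omega
    omega
  obtain ⟨l1, hl1⟩ := Finset.card_pos.mp (by omega : 0 < S.card)
  have hS1 : 0 < (S.erase l1).card := by
    rw [Finset.card_erase_of_mem hl1]; omega
  obtain ⟨l2, hl2⟩ := Finset.card_pos.mp hS1
  have hS2 : 0 < ((S.erase l1).erase l2).card := by
    rw [Finset.card_erase_of_mem hl2, Finset.card_erase_of_mem hl1]; omega
  obtain ⟨l3, hl3⟩ := Finset.card_pos.mp hS2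
  have hl2S : l2 ∈ S := Finset.mem_of_mem_erase hl2
  have hl3S : l3 ∈ S := Finset.mem_of_mem_erase (Finset.mem_of_mem_erase hl3)
  have h21 : l2 ≠ l1 := Finset.ne_of_mem_erase hl2
  have h31 : l3 ≠ l1 := Finset.ne_of_mem_erase (Finset.mem_of_mem_erase hl3)
  have h32 : l3 ≠ l2 := Finset.ne_of_mem_erase hl3
  have hne01 : ∀ l : F, l ∈ S → l ≠ 0 ∧ l ≠ 1 := by
    intro l hl
    rw [hSdef] at hl
    exact ⟨Finset.ne_of_mem_erase (Finset.mem_of_mem_erase hl), Finset.ne_of_mem_erase hl⟩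
  obtain ⟨h10, h11⟩ := hne01 l1 hl1
  obtain ⟨h20, h21'⟩ := hne01 l2 hl2S
  obtain ⟨h30, h31'⟩ := hne01 l3 hl3S
  set lam : Fin 3 → F := ![l1, l2, l3] with hlam
  have hlamne0 : ∀ t, lam t ≠ 0 := by
    intro t; fin_cases t <;> assumption
  have hlamne1 : ∀ t, lam t ≠ 1 := by
    intro t; fin_cases t <;> assumption
  have hl : ∀ t, lam t * (lam t)⁻¹ = 1 := fun t => mul_inv_cancel₀ (hlamne0 t)
  have hm : ∀ t, (1 - lam t) * (1 - lam t)⁻¹ = 1 :=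
    fun t => mul_inv_cancel₀ (sub_ne_zero.mpr (Ne.symm (hlamne1 t)))
  have hlamne : ∀ t t' : Fin 3, t ≠ t' → lam t ≠ lam t' := by
    intro t t' htt
    fin_cases t <;> fin_cases t' <;>
      first
        | exact absurd rfl htt
        | assumption
        | (intro h; exact absurd h.symm (by assumption))
  have hfib : ∀ t t' : Fin 3, t ≠ t' → ∀ e : F,
      (Finset.univ.filter (fun x => (lam t' - lam t) * x = e)).card ≤ 1 := by
    intro t t' htt e
    refine Finset.card_le_one.mpr ?_
    intro a ha b hb
    have ha' := (Finset.mem_filter.mp ha).2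
    have hb' := (Finset.mem_filter.mp hb).2
    have hd : lam t' - lam t ≠ 0 := sub_ne_zero.mpr (Ne.symm (hlamne t t' htt))
    exact mul_left_cancel₀ hd (ha'.trans hb'.symm)
  exact ringCase blue hno σp τp hσ hτ hT₁b i j hconf F hcard
    lam (fun t => (lam t)⁻¹) (fun t => (1 - lam t)⁻¹) hl hm 1 hfib (by omega)

end Stmt8Aux

namespace Stmt8Aux

open Finset

section Prolong

variable {R : Type*} [CommRing R] [DecidableEq R]

/-- the `∞`-class permutation of a prolongation square. -/
def pNone (c : R) : Equiv.Perm (Option R) := Equiv.optionCongr (Equiv.addRight c)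

@[simp] lemma pNone_none (c : R) : pNone c none = none := rfl
@[simp] lemma pNone_some (c : R) (x : R) : pNone c (some x) = some (x + c) := rfl

/-- an affine class permutation of a prolongation square. -/
def pAff (lam laminv muinv c κ : R)
    (hl : lam * laminv = 1) (hm : (1 - lam) * muinv = 1) (hc : c ≠ 0) :
    Equiv.Perm (Option R) where
  toFun a := match a with
    | none => some (κ + lam * c)
    | some x => if x = κ - (1 - lam) * c then none else some (muinv * (κ - lam * x))
  invFun b := match b with
    | none => some (κ - (1 - lam) * c)
    | some y => if y = κ + lam * c then none else some (laminv * (κ - (1 - lam) * y))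
  left_inv a := by
    have hmul : ∀ z : R, (1 - lam) * (muinv * z) = z := by
      intro z; rw [← mul_assoc, hm, one_mul]
    have hlml : ∀ z : R, lam * (laminv * z) = z := by
      intro z; rw [← mul_assoc, hl, one_mul]
    match a with
    | none =>
      show (if κ + lam * c = κ + lam * c then none
        else some (laminv * (κ - (1 - lam) * (κ + lam * c)))) = none
      rw [if_pos rfl]
    | some x =>
      by_cases hx : x = κ - (1 - lam) * c
      · show (match (if x = κ - (1 - lam) * c then none
          else some (muinv * (κ - lam * x)) : Option R) with
          | none => some (κ - (1 - lam) * c)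
          | some y => if y = κ + lam * c then none
              else some (laminv * (κ - (1 - lam) * y))) = some x
        rw [if_pos hx, hx]
      · show (match (if x = κ - (1 - lam) * c then none
          else some (muinv * (κ - lam * x)) : Option R) with
          | none => some (κ - (1 - lam) * c)
          | some y => if y = κ + lam * c then none
              else some (laminv * (κ - (1 - lam) * y))) = some x
        rw [if_neg hx]
        have hy : muinv * (κ - lam * x) ≠ κ + lam * c := by
          intro h
          apply hx
          have h2 : (1 - lam) * (muinv * (κ - lam * x)) = (1 - lam) * (κ + lam * c) :=
            congrArg (fun z => (1 - lam) * z) h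
          rw [hmul] at h2
          -- h2 : κ - lam * x = (1 - lam) * (κ + lam * c)
          have h3 : lam * x = lam * (κ - (1 - lam) * c) := by linear_combination -h2
          have h4 : laminv * (lam * x) = laminv * (lam * (κ - (1 - lam) * c)) :=
            congrArg (fun z => laminv * z) h3
          rw [← mul_assoc, mul_comm laminv lam, hl, one_mul, ← mul_assoc,
            mul_comm laminv lam, hl, one_mul] at h4
          exact h4
        show (if muinv * (κ - lam * x) = κ + lam * c then none
          else some (laminv * (κ - (1 - lam) * (muinv * (κ - lam * x))))) = some x
        rw [if_neg hy, hmul]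
        congr 1
        have h5 : κ - (κ - lam * x) = lam * x := by ring
        rw [h5, ← mul_assoc, mul_comm laminv lam, hl, one_mul]
  right_inv b := by
    have hmul : ∀ z : R, (1 - lam) * (muinv * z) = z := by
      intro z; rw [← mul_assoc, hm, one_mul]
    have hlml : ∀ z : R, lam * (laminv * z) = z := by
      intro z; rw [← mul_assoc, hl, one_mul]
    match b with
    | none =>
      show (if (κ - (1 - lam) * c : R) = κ - (1 - lam) * c then none
        else some (muinv * (κ - lam * (κ - (1 - lam) * c)))) = none
      rw [if_pos rfl]
    | some y =>
      by_cases hy : y = κ + lam * c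
      · show (match (if y = κ + lam * c then none
          else some (laminv * (κ - (1 - lam) * y)) : Option R) with
          | none => some (κ + lam * c)
          | some x => if x = κ - (1 - lam) * c then none
              else some (muinv * (κ - lam * x))) = some y
        rw [if_pos hy, hy]
      · show (match (if y = κ + lam * c then none
          else some (laminv * (κ - (1 - lam) * y)) : Option R) with
          | none => some (κ + lam * c)
          | some x => if x = κ - (1 - lam) * c then none
              else some (muinv * (κ - lam * x))) = some y
        rw [if_neg hy]
        have hx : laminv * (κ - (1 - lam) * y) ≠ κ - (1 - lam) * c := by
          intro h
          apply hy
          have h2 : lam * (laminv * (κ - (1 - lam) * y)) = lam * (κ - (1 - lam) * c) :=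
            congrArg (fun z => lam * z) h
          rw [hlml] at h2
          have h3 : (1 - lam) * y = (1 - lam) * (κ + lam * c) := by linear_combination -h2
          have h4 : muinv * ((1 - lam) * y) = muinv * ((1 - lam) * (κ + lam * c)) :=
            congrArg (fun z => muinv * z) h3
          rw [← mul_assoc, mul_comm muinv (1 - lam), hm, one_mul, ← mul_assoc,
            mul_comm muinv (1 - lam), hm, one_mul] at h4
          exact h4
        show (if laminv * (κ - (1 - lam) * y) = κ - (1 - lam) * c then none
          else some (muinv * (κ - lam * (laminv * (κ - (1 - lam) * y))))) = some y
        rw [if_neg hx, hlml]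
        congr 1
        have h5 : κ - (κ - (1 - lam) * y) = (1 - lam) * y := by ring
        rw [h5, ← mul_assoc, mul_comm muinv (1 - lam), hm, one_mul]

@[simp] lemma pAff_none (lam laminv muinv c κ : R) (hl hm) (hc : c ≠ 0) :
    pAff lam laminv muinv c κ hl hm hc none = some (κ + lam * c) := rfl

lemma pAff_some (lam laminv muinv c κ : R) (hl hm) (hc : c ≠ 0) (x : R) :
    pAff lam laminv muinv c κ hl hm hc (some x) =
      if x = κ - (1 - lam) * c then none else some (muinv * (κ - lam * x)) := rfl

end Prolong

end Stmt8Aux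

namespace Stmt8Aux

open Finset

lemma prolongCase {n m : ℕ} (hnm : n = m + 1) (hn8 : 8 ≤ n)
    (blue : Fin n × Fin n → Bool)
    (hno : ¬ ∃ D : Fin n → Finset (Fin n × Fin n),
      IsDiagonalPartition n D ∧ ∀ k, IsBalanced n blue (D k))
    {T₁ T₂ : Finset (Fin n × Fin n)}
    (σp τp : Equiv.Perm (Fin n))
    (hσ : T₁ = Finset.univ.image fun a => (a, σp a))
    (hτ : T₂ = Finset.univ.image fun a => (a, τp a))
    (hT₁b : ∀ c ∈ T₁, blue c = true)
    (i j : Fin n)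
    (hconf : ∀ c : Fin n × Fin n, blue c = true → c ∈ T₁ ∪ T₂ ∨ c.1 = i ∨ c.2 = j)
    (R : Type*) [CommRing R] [Fintype R] [DecidableEq R]
    (hcard : Fintype.card R = m)
    (lam laminv muinv : Fin 3 → R)
    (hl : ∀ t, lam t * laminv t = 1)
    (hm : ∀ t, (1 - lam t) * muinv t = 1)
    (c : Fin 2 → R) (hc : ∀ s, c s ≠ 0) (hcc : c 0 ≠ c 1)
    (g : ℕ)
    (hfib : ∀ t t' : Fin 3, t ≠ t' → ∀ e : R,
      (Finset.univ.filter (fun x => (lam t' - lam t) * x = e)).card ≤ g)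
    (harith : 15 + 3 * g < 2 * n) : False := by
  classical
  have hcardO : Fintype.card (Option R) = n := by
    rw [Fintype.card_option, hcard, hnm]
  set E : Option R ≃ Fin n := Fintype.equivFinOfCardEq hcardO with hE
  set πf : Fin 2 → Fin 3 → Option R → Equiv.Perm (Option R) :=
    fun s t k => match k with
      | none => pNone (c s)
      | some κ => pAff (lam t) (laminv t) (muinv t) (c s) κ (hl t) (hm t) (hc s)
    with hπf
  have hπn : ∀ s t, πf s t none = pNone (c s) := fun _ _ => rfl
  have hπs : ∀ s t κ, πf s t (some κ) =
      pAff (lam t) (laminv t) (muinv t) (c s) κ (hl t) (hm t) (hc s) := fun _ _ _ => rfl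
  have hmulz : ∀ (t : Fin 3) (z : R), muinv t * ((1 - lam t) * z) = z := by
    intro t z; rw [← mul_assoc, mul_comm (muinv t) (1 - lam t), hm t, one_mul]
  have hcanm : ∀ (t : Fin 3) (u w : R), (1 - lam t) * u = (1 - lam t) * w → u = w := by
    intro t u w h
    have h2 := congrArg (fun z => muinv t * z) h
    rw [hmulz, hmulz] at h2
    exact h2
  have hmuc : ∀ (t : Fin 3) (s : Fin 2), (1 - lam t) * c s ≠ 0 := by
    intro t s h
    apply hc s
    have := hcanm t (c s) 0 (by rw [h, mul_zero])
    exact this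
  -- partition property
  have hpart : ∀ (s : Fin 2) (t : Fin 3) (a b : Option R), ∃! k, πf s t k a = b := by
    intro s t a b
    match a, b with
    | none, none =>
      refine ⟨none, rfl, ?_⟩
      intro k hk
      have hk' : πf s t k none = none := hk
      cases k with
      | none => rfl
      | some κ =>
        rw [hπs, pAff_none] at hk'
        exact absurd hk' (by simp)
    | none, some y =>
      refine ⟨some (y - lam t * c s), ?_, ?_⟩
      · show πf s t (some (y - lam t * c s)) none = some y
        rw [hπs, pAff_none]
        congr 1
        ring
      · intro k hk
        have hk' : πf s t k none = some y := hk
        cases k with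
        | none =>
          rw [hπn s t, pNone_none] at hk'
          exact absurd hk' (by simp)
        | some κ =>
          rw [hπs, pAff_none] at hk'
          have h1 := Option.some.inj hk'
          congr 1
          linear_combination h1
    | some x, none =>
      refine ⟨some (x + (1 - lam t) * c s), ?_, ?_⟩
      · show πf s t (some (x + (1 - lam t) * c s)) (some x) = none
        rw [hπs, pAff_some, if_pos (by ring)]
      · intro k hk
        have hk' : πf s t k (some x) = none := hk
        cases k with
        | none =>
          rw [hπn s t, pNone_some] at hk'
          exact absurd hk' (by simp)
        | some κ =>
          rw [hπs, pAff_some] at hk'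
          by_cases hx : x = κ - (1 - lam t) * c s
          · congr 1
            linear_combination -hx
          · rw [if_neg hx] at hk'
            exact absurd hk' (by simp)
    | some x, some y =>
      by_cases hyx : y = x + c s
      · refine ⟨none, ?_, ?_⟩
        · show πf s t none (some x) = some y
          rw [hπn s t, pNone_some, hyx]
        · intro k hk
          have hk' : πf s t k (some x) = some y := hk
          cases k with
          | none => rfl
          | some κ =>
            exfalso
            rw [hπs, pAff_some] at hk'
            by_cases hx : x = κ - (1 - lam t) * c s
            · rw [if_pos hx] at hk'
              exact absurd hk' (by simp)
            · rw [if_neg hx] at hk'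
              have h1 : muinv t * (κ - lam t * x) = y := Option.some.inj hk'
              have h2 : κ - lam t * x = (1 - lam t) * y := by
                have h3 := congrArg (fun z => (1 - lam t) * z) h1
                rw [← mul_assoc, hm t, one_mul] at h3
                exact h3
              apply hx
              rw [hyx] at h2
              linear_combination -h2
      · refine ⟨some (lam t * x + (1 - lam t) * y), ?_, ?_⟩
        · show πf s t (some (lam t * x + (1 - lam t) * y)) (some x) = some y
          rw [hπs, pAff_some]
          have hxne : x ≠ (lam t * x + (1 - lam t) * y) - (1 - lam t) * c s := by
            intro h
            apply hyx
            refine hcanm t y (x + c s) ?_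
            linear_combination -h
          rw [if_neg hxne]
          congr 1
          have h5 : lam t * x + (1 - lam t) * y - lam t * x = (1 - lam t) * y := by ring
          rw [h5, hmulz]
        · intro k hk
          have hk' : πf s t k (some x) = some y := hk
          cases k with
          | none =>
            exfalso
            rw [hπn s t, pNone_some] at hk'
            exact hyx (Option.some.inj hk').symm
          | some κ =>
            rw [hπs, pAff_some] at hk'
            by_cases hx : x = κ - (1 - lam t) * c s
            · rw [if_pos hx] at hk'
              exact absurd hk' (by simp)
            · rw [if_neg hx] at hk'
              have h1 : muinv t * (κ - lam t * x) = y := Option.some.inj hk'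
              have h2 : κ - lam t * x = (1 - lam t) * y := by
                have h3 := congrArg (fun z => (1 - lam t) * z) h1
                rw [← mul_assoc, hm t, one_mul] at h3
                exact h3
              congr 1
              linear_combination h2
  -- fixed points
  have hfixx : ∀ (s : Fin 2) (t : Fin 3) (k : Option R), ∃ a, πf s t k a = a := by
    intro s t k
    cases k with
    | none => exact ⟨none, rfl⟩
    | some κ =>
      refine ⟨some κ, ?_⟩
      show πf s t (some κ) (some κ) = some κ
      rw [hπs, pAff_some]
      have hne : κ ≠ κ - (1 - lam t) * c s := by
        intro h
        exact hmuc t s (by linear_combination h)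
      rw [if_neg hne]
      congr 1
      have h5 : κ - lam t * κ = (1 - lam t) * κ := by ring
      rw [h5, hmulz]
  have hfixcard : ∀ (s : Fin 2) (t : Fin 3) (k : Option R),
      (Finset.univ.filter (fun a => πf s t k a = a)).card ≤ 1 := by
    intro s t k
    cases k with
    | none =>
      have hsub : (Finset.univ.filter (fun a => πf s t none a = a)) ⊆ {none} := by
        intro a ha
        have ha' := (Finset.mem_filter.mp ha).2
        cases a with
        | none => simp
        | some x =>
          rw [hπn s t, pNone_some] at ha'
          have h1 := Option.some.inj ha'
          exact absurd (by linear_combination h1 : c s = 0) (hc s)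
      simpa using Finset.card_le_card hsub
    | some κ =>
      have hsub : (Finset.univ.filter (fun a => πf s t (some κ) a = a)) ⊆ {some κ} := by
        intro a ha
        have ha' := (Finset.mem_filter.mp ha).2
        cases a with
        | none =>
          rw [hπs, pAff_none] at ha'
          exact absurd ha' (by simp)
        | some x =>
          rw [hπs, pAff_some] at ha'
          by_cases hx : x = κ - (1 - lam t) * c s
          · rw [if_pos hx] at ha'
            exact absurd ha' (by simp)
          · rw [if_neg hx] at ha'
            have h1 : muinv t * (κ - lam t * x) = x := Option.some.inj ha'
            have h2 : κ - lam t * x = (1 - lam t) * x := by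
              have h3 := congrArg (fun z => (1 - lam t) * z) h1
              rw [← mul_assoc, hm t, one_mul] at h3
              exact h3
            have h4 : x = κ := by linear_combination -h2
            simp [h4]
      simpa using Finset.card_le_card hsub
  -- six applications of master
  have hmas : ∀ (s : Fin 2) (t : Fin 3), ∃ q, n ≤ 3 + (Finset.univ.filter
      (fun a => πf s t q a = E.symm (σp.symm (τp (E a))))).card :=
    fun s t => master blue hno σp τp hσ hτ hT₁b i j hconf E (πf s t)
      (hpart s t) (hfixx s t) (hfixcard s t)
  have hkey : ∀ s : Fin 2, n ≤ 3 +
      (Finset.univ.filter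
        (fun a => pNone (c s) a = E.symm (σp.symm (τp (E a))))).card := by
    intro s
    obtain ⟨q0, hq0⟩ := hmas s 0
    obtain ⟨q1, hq1⟩ := hmas s 1
    obtain ⟨q2, hq2⟩ := hmas s 2
    rcases q0 with _ | κ0
    · simpa only [hπn s 0] using hq0
    rcases q1 with _ | κ1
    · simpa only [hπn s 1] using hq1
    rcases q2 with _ | κ2
    · simpa only [hπn s 2] using hq2
    exfalso
    set κv : Fin 3 → R := fun t => if t = 0 then κ0 else if t = 1 then κ1 else κ2 with hκv
    set S : Fin 3 → Finset (Option R) := fun t =>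
      Finset.univ.filter
        (fun a => πf s t (some (κv t)) a = E.symm (σp.symm (τp (E a)))) with hS
    have hS0 : n ≤ 3 + (S 0).card := by simpa [hS, hκv] using hq0
    have hS1 : n ≤ 3 + (S 1).card := by simpa [hS, hκv] using hq1
    have hS2 : n ≤ 3 + (S 2).card := by simpa [hS, hκv] using hq2
    have hover : ∀ t t' : Fin 3, t ≠ t' → (S t ∩ S t').card ≤ 2 + g := by
      intro t t' htt
      have hsub : S t ∩ S t' ⊆ insert (none : Option R)
          (insert (some (κv t - (1 - lam t) * c s))
            ((Finset.univ.filter (fun x : R => (lam t' - lam t) * x =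
              (1 - lam t) * κv t' - (1 - lam t') * κv t)).image some)) := by
        intro a ha
        rw [Finset.mem_inter] at ha
        obtain ⟨h1, h2⟩ := ha
        have h1' := (Finset.mem_filter.mp h1).2
        have h2' := (Finset.mem_filter.mp h2).2
        have heq : πf s t (some (κv t)) a = πf s t' (some (κv t')) a := h1'.trans h2'.symm
        cases a with
        | none => exact Finset.mem_insert_self _ _
        | some x =>
          rw [hπs, hπs, pAff_some, pAff_some] at heq
          by_cases hx : x = κv t - (1 - lam t) * c s
          · refine Finset.mem_insert.mpr (Or.inr (Finset.mem_insert.mpr (Or.inl ?_)))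
            rw [hx]
          · rw [if_neg hx] at heq
            by_cases hx' : x = κv t' - (1 - lam t') * c s
            · rw [if_pos hx'] at heq
              exact absurd heq (by simp)
            · rw [if_neg hx'] at heq
              have h3 : muinv t * (κv t - lam t * x) = muinv t' * (κv t' - lam t' * x) :=
                Option.some.inj heq
              have e1 : κv t - lam t * x =
                  (1 - lam t) * (muinv t' * (κv t' - lam t' * x)) := by
                have h4 := congrArg (fun z => (1 - lam t) * z) h3
                rw [← mul_assoc, hm t, one_mul] at h4
                exact h4
              have e2 : κv t' - lam t' * x =
                  (1 - lam t') * (muinv t' * (κv t' - lam t' * x)) := by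
                rw [← mul_assoc, hm t', one_mul]
              have hlin : (lam t' - lam t) * x =
                  (1 - lam t) * κv t' - (1 - lam t') * κv t := by
                linear_combination (1 - lam t') * e1 - (1 - lam t) * e2
              refine Finset.mem_insert.mpr (Or.inr (Finset.mem_insert.mpr (Or.inr ?_)))
              exact Finset.mem_image.mpr
                ⟨x, Finset.mem_filter.mpr ⟨Finset.mem_univ _, hlin⟩, rfl⟩
      have hcardb : (insert (none : Option R)
          (insert (some (κv t - (1 - lam t) * c s))
            ((Finset.univ.filter (fun x : R => (lam t' - lam t) * x =
              (1 - lam t) * κv t' - (1 - lam t') * κv t)).image some))).card ≤ 2 + g := by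
        have ha1 := Finset.card_insert_le (none : Option R)
          (insert (some (κv t - (1 - lam t) * c s))
            ((Finset.univ.filter (fun x : R => (lam t' - lam t) * x =
              (1 - lam t) * κv t' - (1 - lam t') * κv t)).image some))
        have ha2 := Finset.card_insert_le (some (κv t - (1 - lam t) * c s))
          ((Finset.univ.filter (fun x : R => (lam t' - lam t) * x =
            (1 - lam t) * κv t' - (1 - lam t') * κv t)).image some)
        have ha3 := Finset.card_image_le (s := Finset.univ.filter
          (fun x : R => (lam t' - lam t) * x =
            (1 - lam t) * κv t' - (1 - lam t') * κv t)) (f := some)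
        have ha4 := hfib t t' htt ((1 - lam t) * κv t' - (1 - lam t') * κv t)
        omega
      exact le_trans (Finset.card_le_card hsub) hcardb
    have h01 := hover 0 1 (by decide)
    have h02 := hover 0 2 (by decide)
    have h12 := hover 1 2 (by decide)
    have htri := tripleIE (S 0) (S 1) (S 2)
    rw [hcardO] at htri
    omega
  have hB0 := hkey 0
  have hB1 := hkey 1
  have hpair := pairIE
    (Finset.univ.filter (fun a => pNone (c 0) a = E.symm (σp.symm (τp (E a)))))
    (Finset.univ.filter (fun a => pNone (c 1) a = E.symm (σp.symm (τp (E a)))))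
  rw [hcardO] at hpair
  have hint : ((Finset.univ.filter
        (fun a => pNone (c 0) a = E.symm (σp.symm (τp (E a))))) ∩
      (Finset.univ.filter
        (fun a => pNone (c 1) a = E.symm (σp.symm (τp (E a)))))).card ≤ 1 := by
    have hsub : ((Finset.univ.filter
        (fun a => pNone (c 0) a = E.symm (σp.symm (τp (E a))))) ∩
      (Finset.univ.filter
        (fun a => pNone (c 1) a = E.symm (σp.symm (τp (E a)))))) ⊆ {none} := by
      intro a ha
      rw [Finset.mem_inter] at ha
      obtain ⟨h1, h2⟩ := ha
      have h1' := (Finset.mem_filter.mp h1).2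
      have h2' := (Finset.mem_filter.mp h2).2
      have heq : pNone (c 0) a = pNone (c 1) a := h1'.trans h2'.symm
      cases a with
      | none => simp
      | some x =>
        rw [pNone_some, pNone_some] at heq
        have h3 := Option.some.inj heq
        exact absurd (by linear_combination h3 : c 0 = c 1) hcc
    simpa using Finset.card_le_card hsub
  omega

end Stmt8Aux

namespace Stmt8Aux

open Finset

lemma evenCase {n : ℕ} (hn12 : 12 ≤ n) (heven : Even n)
    (blue : Fin n × Fin n → Bool)
    (hno : ¬ ∃ D : Fin n → Finset (Fin n × Fin n),
      IsDiagonalPartition n D ∧ ∀ k, IsBalanced n blue (D k))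
    {T₁ T₂ : Finset (Fin n × Fin n)}
    (σp τp : Equiv.Perm (Fin n))
    (hσ : T₁ = Finset.univ.image fun a => (a, σp a))
    (hτ : T₂ = Finset.univ.image fun a => (a, τp a))
    (hT₁b : ∀ c ∈ T₁, blue c = true)
    (i j : Fin n)
    (hconf : ∀ c : Fin n × Fin n, blue c = true → c ∈ T₁ ∪ T₂ ∨ c.1 = i ∨ c.2 = j) :
    False := by
  obtain ⟨m, rfl⟩ : ∃ m, n = m + 1 := ⟨n - 1, by omega⟩
  have hm11 : 11 ≤ m := by omega
  have hmodd : Odd m := by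
    obtain ⟨k, hk⟩ := heven
    exact ⟨k - 1, by omega⟩
  haveI : NeZero m := ⟨by omega⟩
  classical
  set tI : ZMod m := (((m+1)/2 : ℕ) : ZMod m) with htI
  have hnat : 2 * ((m+1)/2) = m + 1 := by obtain ⟨k, hk⟩ := hmodd; omega
  have h2 : (2 : ZMod m) * tI = 1 := by
    rw [htI]
    calc (2 : ZMod m) * (((m+1)/2 : ℕ) : ZMod m)
        = ((2 * ((m+1)/2) : ℕ) : ZMod m) := by push_cast; ring
      _ = ((m + 1 : ℕ) : ZMod m) := by rw [hnat]
      _ = 1 := by push_cast; simp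
  have hcardR : Fintype.card (ZMod m) = m := ZMod.card m
  set lam : Fin 3 → ZMod m := ![tI, 2, -1] with hlam
  set laminv : Fin 3 → ZMod m := ![2, tI, -1] with hlaminv
  set muinv : Fin 3 → ZMod m := ![2, -1, tI] with hmuinv
  have hl : ∀ t, lam t * laminv t = 1 := by
    intro t
    fin_cases t
    · show tI * 2 = 1; linear_combination h2
    · show (2 : ZMod m) * tI = 1; exact h2
    · show (-1 : ZMod m) * -1 = 1; ring
  have hm : ∀ t, (1 - lam t) * muinv t = 1 := by
    intro t
    fin_cases t
    · show (1 - tI) * 2 = 1; linear_combination -h2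
    · show (1 - 2 : ZMod m) * (-1) = 1; ring
    · show (1 - (-1) : ZMod m) * tI = 1; linear_combination h2
  have htI2 : tI * 2 = 1 := by linear_combination h2
  have hntI2 : (-tI) * (-2) = 1 := by linear_combination h2
  have h1u : (1 : ZMod m) * 1 = 1 := by ring
  have hn1u : (-1 : ZMod m) * (-1) = 1 := by ring
  have hfibgen : ∀ (A : ℕ),
      (∀ e : ZMod m, (Finset.univ.filter (fun x : ZMod m => 3 * x = e)).card ≤ A) →
      ∀ t t' : Fin 3, t ≠ t' → ∀ e : ZMod m,
      (Finset.univ.filter (fun x => (lam t' - lam t) * x = e)).card ≤ A := by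
    intro A hbase t t' htt e
    have hex : ∃ u v : ZMod m, u * v = 1 ∧ lam t' - lam t = 3 * u := by
      fin_cases t <;> fin_cases t'
      · exact absurd rfl htt
      · exact ⟨tI, 2, htI2, by show (2:ZMod m) - tI = 3*tI; linear_combination (-2:ZMod m)*h2⟩
      · exact ⟨-tI, -2, hntI2, by show (-1:ZMod m) - tI = 3*(-tI); linear_combination h2⟩
      · exact ⟨-tI, -2, hntI2, by show tI - 2 = 3*(-tI); linear_combination (2:ZMod m)*h2⟩
      · exact absurd rfl htt
      · exact ⟨-1, -1, hn1u, by show (-1:ZMod m) - 2 = 3*(-1); ring⟩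
      · exact ⟨tI, 2, htI2, by show tI - (-1) = 3*tI; linear_combination -h2⟩
      · exact ⟨1, 1, h1u, by show (2:ZMod m) - (-1) = 3*1; ring⟩
      · exact absurd rfl htt
    obtain ⟨u, v, huv, hd⟩ := hex
    simp only [hd]
    exact fibMul u v huv e A hbase
  -- the two shift constants
  have hv1 : ((1:ℕ) : ZMod m).val = 1 := ZMod.val_cast_of_lt (by omega)
  have hv2 : ((2:ℕ) : ZMod m).val = 2 := ZMod.val_cast_of_lt (by omega)
  set c : Fin 2 → ZMod m := ![((1:ℕ) : ZMod m), ((2:ℕ) : ZMod m)] with hcdef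
  have hc : ∀ s, c s ≠ 0 := by
    intro s
    fin_cases s
    · show ((1:ℕ) : ZMod m) ≠ 0
      intro h
      have := congrArg ZMod.val h
      rw [hv1, ZMod.val_zero] at this
      omega
    · show ((2:ℕ) : ZMod m) ≠ 0
      intro h
      have := congrArg ZMod.val h
      rw [hv2, ZMod.val_zero] at this
      omega
  have hcc : c 0 ≠ c 1 := by
    show ((1:ℕ) : ZMod m) ≠ ((2:ℕ) : ZMod m)
    intro h
    have := congrArg ZMod.val h
    rw [hv1, hv2] at this
    omega
  by_cases h3 : (3 : ℕ) ∣ m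
  · have hn16 : 16 ≤ m + 1 := by
      obtain ⟨t, ht⟩ := h3
      obtain ⟨k, hk⟩ := hmodd
      omega
    have hbase : ∀ e : ZMod m,
        (Finset.univ.filter (fun x : ZMod m => 3 * x = e)).card ≤ 3 :=
      fun e => fibOfAnn 3 e 3 annCard3
    exact prolongCase rfl (by omega) blue hno σp τp hσ hτ hT₁b i j hconf (ZMod m) hcardR
      lam laminv muinv hl hm c hc hcc 3 (hfibgen 3 hbase) (by omega)
  · have hbase : ∀ e : ZMod m,
        (Finset.univ.filter (fun x : ZMod m => 3 * x = e)).card ≤ 1 :=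
      fun e => fibOfAnn 3 e 1 (annCard1 h3)
    exact prolongCase rfl (by omega) blue hno σp τp hσ hτ hT₁b i j hconf (ZMod m) hcardR
      lam laminv muinv hl hm c hc hcc 1 (hfibgen 1 hbase) (by omega)

lemma fieldProlong {n m : ℕ} (hnm : n = m + 1) (hn8 : 8 ≤ n) (hari : 18 < 2 * n)
    (blue : Fin n × Fin n → Bool)
    (hno : ¬ ∃ D : Fin n → Finset (Fin n × Fin n),
      IsDiagonalPartition n D ∧ ∀ k, IsBalanced n blue (D k))
    {T₁ T₂ : Finset (Fin n × Fin n)}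
    (σp τp : Equiv.Perm (Fin n))
    (hσ : T₁ = Finset.univ.image fun a => (a, σp a))
    (hτ : T₂ = Finset.univ.image fun a => (a, τp a))
    (hT₁b : ∀ c ∈ T₁, blue c = true)
    (i j : Fin n)
    (hconf : ∀ c : Fin n × Fin n, blue c = true → c ∈ T₁ ∪ T₂ ∨ c.1 = i ∨ c.2 = j)
    (F : Type*) [Field F] [Fintype F] [DecidableEq F]
    (hcard : Fintype.card F = m) (hm5 : 5 ≤ m) :
    False := by
  classical
  set S : Finset F := (Finset.univ.erase 0).erase 1 with hSdef
  have hScard : 3 ≤ S.card := by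
    have h1 : (Finset.univ.erase (0:F)).card = Fintype.card F - 1 := by
      rw [Finset.card_erase_of_mem (Finset.mem_univ _), Finset.card_univ]
    have h2 : S.card ≥ (Finset.univ.erase (0:F)).card - 1 := by
      rw [hSdef]
      by_cases h : (1 : F) ∈ Finset.univ.erase (0:F)
      · rw [Finset.card_erase_of_mem h]
      · rw [Finset.erase_eq_of_notMem h]; omega
    omega
  obtain ⟨l1, hl1⟩ := Finset.card_pos.mp (by omega : 0 < S.card)
  have hS1 : 0 < (S.erase l1).card := by
    rw [Finset.card_erase_of_mem hl1]; omega
  obtain ⟨l2, hl2⟩ := Finset.card_pos.mp hS1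
  have hS2 : 0 < ((S.erase l1).erase l2).card := by
    rw [Finset.card_erase_of_mem hl2, Finset.card_erase_of_mem hl1]; omega
  obtain ⟨l3, hl3⟩ := Finset.card_pos.mp hS2
  have hl2S : l2 ∈ S := Finset.mem_of_mem_erase hl2
  have hl3S : l3 ∈ S := Finset.mem_of_mem_erase (Finset.mem_of_mem_erase hl3)
  have h21 : l2 ≠ l1 := Finset.ne_of_mem_erase hl2
  have h31 : l3 ≠ l1 := Finset.ne_of_mem_erase (Finset.mem_of_mem_erase hl3)
  have h32 : l3 ≠ l2 := Finset.ne_of_mem_erase hl3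
  have hne01 : ∀ l : F, l ∈ S → l ≠ 0 ∧ l ≠ 1 := by
    intro l hl
    rw [hSdef] at hl
    exact ⟨Finset.ne_of_mem_erase (Finset.mem_of_mem_erase hl), Finset.ne_of_mem_erase hl⟩
  obtain ⟨h10, h11⟩ := hne01 l1 hl1
  obtain ⟨h20, h21'⟩ := hne01 l2 hl2S
  obtain ⟨h30, h31'⟩ := hne01 l3 hl3S
  set lam : Fin 3 → F := ![l1, l2, l3] with hlam
  have hlamne0 : ∀ t, lam t ≠ 0 := by
    intro t; fin_cases t <;> assumption
  have hlamne1 : ∀ t, lam t ≠ 1 := by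
    intro t; fin_cases t <;> assumption
  have hl' : ∀ t, lam t * (lam t)⁻¹ = 1 := fun t => mul_inv_cancel₀ (hlamne0 t)
  have hm' : ∀ t, (1 - lam t) * (1 - lam t)⁻¹ = 1 :=
    fun t => mul_inv_cancel₀ (sub_ne_zero.mpr (Ne.symm (hlamne1 t)))
  have hlamne : ∀ t t' : Fin 3, t ≠ t' → lam t ≠ lam t' := by
    intro t t' htt
    fin_cases t <;> fin_cases t' <;>
      first
        | exact absurd rfl htt
        | assumption
        | (intro h; exact absurd h.symm (by assumption))
  have hfib : ∀ t t' : Fin 3, t ≠ t' → ∀ e : F,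
      (Finset.univ.filter (fun x => (lam t' - lam t) * x = e)).card ≤ 1 := by
    intro t t' htt e
    refine Finset.card_le_one.mpr ?_
    intro a ha b hb
    have ha' := (Finset.mem_filter.mp ha).2
    have hb' := (Finset.mem_filter.mp hb).2
    have hd : lam t' - lam t ≠ 0 := sub_ne_zero.mpr (Ne.symm (hlamne t t' htt))
    exact mul_left_cancel₀ hd (ha'.trans hb'.symm)
  -- shift constants : l1 and l2 are nonzero and distinct
  set c : Fin 2 → F := ![l1, l2] with hcdef
  have hc : ∀ s, c s ≠ 0 := by
    intro s; fin_cases s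
    · exact h10
    · exact h20
  have hcc : c 0 ≠ c 1 := by
    show l1 ≠ l2
    exact fun h => h21 h.symm
  exact prolongCase hnm hn8 blue hno σp τp hσ hτ hT₁b i j hconf F hcard
    lam (fun t => (lam t)⁻¹) (fun t => (1 - lam t)⁻¹) hl' hm' c hc hcc 1 hfib (by omega)

end Stmt8Aux

theorem stmt8_main (n : ℕ) (hn : 7 ≤ n) (blue : Fin n × Fin n → Bool)
    (hno : ¬ ∃ D : Fin n → Finset (Fin n × Fin n),
      IsDiagonalPartition n D ∧ ∀ k, IsBalanced n blue (D k))
    (T₁ T₂ : Finset (Fin n × Fin n)) (hT₁ : IsDiagonal n T₁) (hT₂ : IsDiagonal n T₂)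
    (hT₁b : ∀ c ∈ T₁, blue c = true) (hT₂b : ∀ c ∈ T₂, blue c = true)
    (i j : Fin n) (hmeet : T₁ ∩ T₂ = {(i, j)}) :
    ∃ c : Fin n × Fin n, blue c = true ∧ c ∉ T₁ ∪ T₂ ∧ c.1 ≠ i ∧ c.2 ≠ j := by
  by_contra hcon
  push_neg at hcon
  obtain ⟨σp, hσ⟩ := hT₁
  obtain ⟨τp, hτ⟩ := hT₂
  have hconf : ∀ c : Fin n × Fin n, blue c = true → c ∈ T₁ ∪ T₂ ∨ c.1 = i ∨ c.2 = j := by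
    intro c hb
    by_cases h1 : c ∈ T₁ ∪ T₂
    · exact Or.inl h1
    by_cases h2 : c.1 = i
    · exact Or.inr (Or.inl h2)
    · exact Or.inr (Or.inr (hcon c hb h1 h2))
  rcases Nat.even_or_odd n with he | ho
  · -- n even
    by_cases h8 : n = 8
    · subst h8
      haveI : Fact (Nat.Prime 2) := ⟨by norm_num⟩
      letI : Fintype (GaloisField 2 3) := Fintype.ofFinite _
      letI : DecidableEq (GaloisField 2 3) := Classical.decEq _
      have hc8 : Fintype.card (GaloisField 2 3) = 8 := by
        rw [← Nat.card_eq_fintype_card, GaloisField.card 2 3 (by norm_num)]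
        norm_num
      exact Stmt8Aux.fieldCase (by norm_num) blue hno σp τp hσ hτ hT₁b i j hconf
        (GaloisField 2 3) hc8
    by_cases h10 : n = 10
    · subst h10
      haveI : Fact (Nat.Prime 3) := ⟨by norm_num⟩
      letI : Fintype (GaloisField 3 2) := Fintype.ofFinite _
      letI : DecidableEq (GaloisField 3 2) := Classical.decEq _
      have hc9 : Fintype.card (GaloisField 3 2) = 9 := by
        rw [← Nat.card_eq_fintype_card, GaloisField.card 3 2 (by norm_num)]
        norm_num
      exact Stmt8Aux.fieldProlong (by norm_num) (by norm_num) (by norm_num)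
        blue hno σp τp hσ hτ hT₁b i j hconf (GaloisField 3 2) hc9 (by norm_num)
    · have h12 : 12 ≤ n := by
        obtain ⟨k, hk⟩ := he
        omega
      exact Stmt8Aux.evenCase h12 he blue hno σp τp hσ hτ hT₁b i j hconf
  · -- n odd
    by_cases h9 : n = 9
    · subst h9
      haveI : Fact (Nat.Prime 3) := ⟨by norm_num⟩
      letI : Fintype (GaloisField 3 2) := Fintype.ofFinite _
      letI : DecidableEq (GaloisField 3 2) := Classical.decEq _
      have hc9 : Fintype.card (GaloisField 3 2) = 9 := by
        rw [← Nat.card_eq_fintype_card, GaloisField.card 3 2 (by norm_num)]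
        norm_num
      exact Stmt8Aux.fieldCase (by norm_num) blue hno σp τp hσ hτ hT₁b i j hconf
        (GaloisField 3 2) hc9
    · exact Stmt8Aux.oddCase hn ho h9 blue hno σp τp hσ hτ hT₁b i j hconf


/-- If `M` has no partition into balanced diagonals and `T₁, T₂` are blue diagonals with
`T₁ ∩ T₂ = {(i,j)}`, then there is a blue cell outside `T₁ ∪ T₂` avoiding row `i` and
column `j`. -/
theorem stmt8 (n : ℕ) (hn : 7 ≤ n) (blue : Fin n × Fin n → Bool)
    (hno : ¬ ∃ D : Fin n → Finset (Fin n × Fin n),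
      IsDiagonalPartition n D ∧ ∀ k, IsBalanced n blue (D k))
    (T₁ T₂ : Finset (Fin n × Fin n)) (hT₁ : IsDiagonal n T₁) (hT₂ : IsDiagonal n T₂)
    (hT₁b : ∀ c ∈ T₁, blue c = true) (hT₂b : ∀ c ∈ T₂, blue c = true)
    (i j : Fin n) (hmeet : T₁ ∩ T₂ = {(i, j)}) :
    ∃ c : Fin n × Fin n, blue c = true ∧ c ∉ T₁ ∪ T₂ ∧ c.1 ≠ i ∧ c.2 ≠ j := by
  exact stmt8_main n hn blue hno T₁ T₂ hT₁ hT₂ hT₁b hT₂b i j hmeet
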